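/- Let H be a subgroup of the group of invertible N×N complex matrices. Suppose that for every full flag 0 = V₀ ⊂ V₁ ⊂ ⋯ ⊂ V_N = ℂᴺ (with dim V_i = i) the set {h ∈ H : h(V_i) = V_i for all i} is a connected subset of the space of N×N complex matrices. Then for every chain of subspaces 0 = W₀ ⊆ W₁ ⊆ ⋯ ⊆ W_k = ℂᴺ the set {h ∈ H : h(W_j) = W_j for all j} is connected. -/

import Mathlib

open Module Submodule

lemma flag_step {M : Type*} [AddCommGroup M] [Module ℂ M] [FiniteDimensional ℂ M]
    (f : M →ₗ[ℂ] M) (p q : Submodule ℂ M)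
    (hfp : p.map f ≤ p) (hfq : q.map f ≤ q) (hpq : p < q) :
    ∃ p' : Submodule ℂ M, p ≤ p' ∧ p' ≤ q ∧ p'.map f ≤ p' ∧
      finrank ℂ p' = finrank ℂ p + 1 := by
  classical
  set π := p.mkQ with hπ
  have hle : p ≤ comap f p := map_le_iff_le_comap.mp hfp
  set fbar : (M ⧸ p) →ₗ[ℂ] (M ⧸ p) := p.mapQ p f hle with hfbar
  have hcomm : ∀ x : M, fbar (π x) = π (f x) := fun x => Submodule.mapQ_apply p p f x
  set q' : Submodule ℂ (M ⧸ p) := q.map π with hq'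
  have hq'inv : ∀ x ∈ q', fbar x ∈ q' := by
    rintro x ⟨y, hy, rfl⟩
    exact ⟨f y, hfq ⟨y, hy, rfl⟩, (hcomm y).symm⟩
  -- q' is nontrivial
  obtain ⟨z, hzq, hzp⟩ := SetLike.exists_of_lt hpq
  have hz0 : π z ≠ 0 := by
    simpa [π, Submodule.Quotient.mk_eq_zero] using hzp
  have : Nontrivial q' := nontrivial_of_ne ⟨π z, ⟨z, hzq, rfl⟩⟩ 0 (by
    simp only [ne_eq, Subtype.ext_iff]; exact hz0)
  set f' : Module.End ℂ q' := fbar.restrict hq'inv with hf'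
  obtain ⟨μ, hμ⟩ := Module.End.exists_eigenvalue f'
  obtain ⟨v, hv⟩ := hμ.exists_hasEigenvector
  have hv0 : (v : M ⧸ p) ≠ 0 := fun h => hv.2 (Subtype.coe_injective h)
  have hfv : fbar (v : M ⧸ p) = μ • (v : M ⧸ p) := by
    have := congrArg (Subtype.val) hv.apply_eq_smul
    simpa [f', LinearMap.restrict_coe_apply] using this
  set c : M ⧸ p := (v : M ⧸ p)
  refine ⟨comap π (span ℂ {c}), ?_, ?_, ?_, ?_⟩
  · intro x hx
    simp only [mem_comap]
    have : π x = 0 := by simpa [π, Submodule.Quotient.mk_eq_zero] using hx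
    simp [this]
  · intro x hx
    have hxc : π x ∈ span ℂ {c} := hx
    have hcq' : span ℂ {c} ≤ q' := by
      rw [span_le, Set.singleton_subset_iff]; exact v.2
    obtain ⟨y, hy, hyx⟩ := hcq' hxc
    have hpmem : x - y ∈ p := by
      rw [← Submodule.Quotient.mk_eq_zero]
      show π (x - y) = 0
      rw [map_sub, hyx, sub_self]
    have hqmem := hpq.le hpmem
    have hx' : x = y + (x - y) := by abel
    rw [hx']; exact q.add_mem hy hqmem
  · rintro x ⟨y, hy, rfl⟩
    have hyc : π y ∈ span ℂ {c} := hy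
    obtain ⟨a, ha⟩ := mem_span_singleton.mp hyc
    have : π (f y) = (a * μ) • c := by
      rw [← hcomm, ← ha, map_smul, hfv, smul_smul]
    simp only [mem_comap, this]
    exact smul_mem _ _ (mem_span_singleton_self c)
  · -- finrank
    set p' := comap π (span ℂ {c}) with hp'def
    have hmap : p'.map π = span ℂ {c} := by
      rw [hp'def, Submodule.map_comap_eq, Submodule.range_mkQ, top_inf_eq]
    have hpp' : p ≤ p' := by
      intro x hx
      simp only [hp'def, mem_comap]
      have : π x = 0 := by simpa [π, Submodule.Quotient.mk_eq_zero] using hx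
      simp [this]
    have key := LinearMap.finrank_range_add_finrank_ker (π ∘ₗ p'.subtype)
    have hrange : LinearMap.range (π ∘ₗ p'.subtype) = span ℂ {c} := by
      rw [LinearMap.range_comp, Submodule.range_subtype, hmap]
    have hker : LinearMap.ker (π ∘ₗ p'.subtype) = comap p'.subtype p := by
      rw [LinearMap.ker_comp, Submodule.ker_mkQ]
    rw [hrange, hker] at key
    have e := Submodule.comapSubtypeEquivOfLe hpp'
    rw [finrank_span_singleton hv0, e.finrank_eq] at key
    omega

open Module Submodule in
lemma exists_refining_chain {M : Type*} [AddCommGroup M] [Module ℂ M] [FiniteDimensional ℂ M]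
    (f : M →ₗ[ℂ] M) {k : ℕ} (W : Fin (k + 1) → Submodule ℂ M) (hW : Monotone W)
    (htop : W (Fin.last k) = ⊤) (hinv : ∀ j, (W j).map f ≤ W j) :
    ∃ V : ℕ → Submodule ℂ M, Monotone V ∧
      (∀ m ≤ finrank ℂ M, finrank ℂ (V m) = m ∧ (V m).map f ≤ V m) ∧
      (∀ j, V (finrank ℂ (W j)) = W j) := by
  classical
  set N := finrank ℂ M with hN
  set Q : ℕ → Submodule ℂ M → Prop := fun m p =>
    p.map f ≤ p ∧ finrank ℂ p = m ∧
      ∀ j, (finrank ℂ (W j) ≤ m → W j ≤ p) ∧ (m ≤ finrank ℂ (W j) → p ≤ W j) with hQ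
  have main : ∀ n, n ≤ N → ∃ V : ℕ → Submodule ℂ M,
      (∀ m, V m ≤ V (m + 1)) ∧ ∀ m ≤ n, Q m (V m) := by
    intro n
    induction n with
    | zero =>
      intro _
      refine ⟨fun _ => ⊥, fun _ => le_rfl, ?_⟩
      intro m hm
      interval_cases m
      refine ⟨by simp, by simp, fun j => ⟨fun hj => ?_, fun _ => bot_le⟩⟩
      rw [Nat.le_zero] at hj
      rw [Submodule.finrank_eq_zero.mp hj]
    | succ n ih =>
      intro hn1
      obtain ⟨V, hmono, hQV⟩ := ih (by omega)
      have hQn := hQV n le_rfl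
      -- find minimal index j* with n < finrank (W j*)
      set s : Finset (Fin (k + 1)) := Finset.univ.filter (fun j => n < finrank ℂ (W j))
        with hs
      have hsne : s.Nonempty := by
        refine ⟨Fin.last k, ?_⟩
        have hfr : finrank ℂ (W (Fin.last k)) = N := by rw [htop]; exact finrank_top ℂ M
        simp only [hs, Finset.mem_filter, Finset.mem_univ, true_and, hfr]
        omega
      set js := s.min' hsne with hjs
      have hjsmem : js ∈ s := s.min'_mem hsne
      have hjslt : n < finrank ℂ (W js) := by
        simpa [hs, Finset.mem_filter] using hjsmem
      have hVle : V n ≤ W js := (hQn.2.2 js).2 (le_of_lt hjslt)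
      have hVlt : V n < W js := by
        refine hVle.lt_of_ne fun h => ?_
        rw [h] at hQn
        omega
      obtain ⟨p', hp1, hp2, hp3, hp4⟩ := flag_step f (V n) (W js) hQn.1 (hinv js) hVlt
      refine ⟨fun m => if m ≤ n then V m else p', ?_, ?_⟩
      · intro m
        by_cases h1 : m + 1 ≤ n
        · simp only [if_pos (by omega : m ≤ n), if_pos h1]; exact hmono m
        · by_cases h2 : m ≤ n
          · have hmn : m = n := by omega
            subst hmn
            simp only [if_pos h2, if_neg h1]
            exact hp1
          · simp only [if_neg h2, if_neg h1, le_rfl]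
      · intro m hm
        by_cases h2 : m ≤ n
        · simp only [if_pos h2]; exact hQV m h2
        · have hmeq : m = n + 1 := by omega
          simp only [if_neg h2]
          subst hmeq
          have hfr : finrank ℂ p' = n + 1 := by rw [hp4, hQn.2.1]
          have hup : ∀ j, n + 1 ≤ finrank ℂ (W j) → p' ≤ W j := by
            intro j hj
            have hjmem : j ∈ s := by
              simp only [hs, Finset.mem_filter, Finset.mem_univ, true_and]; omega
            exact hp2.trans (hW (s.min'_le j hjmem))
          refine ⟨hp3, hfr, fun j => ⟨fun hj => ?_, hup j⟩⟩
          rcases Nat.lt_or_ge (finrank ℂ (W j)) (n + 1) with h | h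
          · exact ((hQn.2.2 j).1 (by omega)).trans hp1
          · exact (Submodule.eq_of_le_of_finrank_le (hup j h) (by omega)).ge
  obtain ⟨V, hmono, hQV⟩ := main N le_rfl
  refine ⟨V, monotone_nat_of_le_succ hmono, fun m hm => ⟨(hQV m hm).2.1, (hQV m hm).1⟩, ?_⟩
  intro j
  have hle : finrank ℂ (W j) ≤ N := Submodule.finrank_le (W j)
  have h := hQV _ hle
  exact le_antisymm ((h.2.2 j).2 le_rfl) ((h.2.2 j).1 le_rfl)



/-- If a subgroup `H` of `GL(N, ℂ)` has connected intersection with the stabilizer of every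
full flag in `ℂᴺ` (i.e. with every Borel subgroup), then it has connected intersection with
the stabilizer of every chain of subspaces (i.e. with every parabolic subgroup). -/
theorem parabolically_connected_of_borel_connected (N : ℕ)
    (H : Subgroup (Matrix.GeneralLinearGroup (Fin N) ℂ))
    (hBorel : ∀ V : Fin (N + 1) → Submodule ℂ (Fin N → ℂ),
      Monotone V → V 0 = ⊥ → V (Fin.last N) = ⊤ →
      (∀ i : Fin (N + 1), Module.finrank ℂ (V i) = (i : ℕ)) →
      IsConnected {g : Matrix (Fin N) (Fin N) ℂ |
        ∃ h ∈ H, ((h : Matrix.GeneralLinearGroup (Fin N) ℂ) : Matrix (Fin N) (Fin N) ℂ) = g ∧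
          ∀ i : Fin (N + 1), (V i).map (Matrix.toLin' g) = V i}) :
    ∀ (k : ℕ) (W : Fin (k + 1) → Submodule ℂ (Fin N → ℂ)),
      Monotone W → W 0 = ⊥ → W (Fin.last k) = ⊤ →
      IsConnected {g : Matrix (Fin N) (Fin N) ℂ |
        ∃ h ∈ H, ((h : Matrix.GeneralLinearGroup (Fin N) ℂ) : Matrix (Fin N) (Fin N) ℂ) = g ∧
          ∀ j : Fin (k + 1), (W j).map (Matrix.toLin' g) = W j} := by
  intro k W hWmono hWbot hWtop
  have hone : (1 : Matrix (Fin N) (Fin N) ℂ) ∈ {g : Matrix (Fin N) (Fin N) ℂ |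
      ∃ h ∈ H, ((h : Matrix.GeneralLinearGroup (Fin N) ℂ) : Matrix (Fin N) (Fin N) ℂ) = g ∧
        ∀ j : Fin (k + 1), (W j).map (Matrix.toLin' g) = W j} :=
    ⟨1, H.one_mem, rfl, fun j => by rw [Matrix.toLin'_one, Submodule.map_id]⟩
  refine ⟨⟨1, hone⟩, isPreconnected_of_forall 1 ?_⟩
  intro g hg
  obtain ⟨h, hH, hcoe, hstab⟩ := hg
  -- toLin' g is injective
  have hinv1 : ((h⁻¹ : Matrix.GeneralLinearGroup (Fin N) ℂ) : Matrix (Fin N) (Fin N) ℂ) * g = 1 := by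
    rw [← hcoe, ← Matrix.GeneralLinearGroup.coe_mul, inv_mul_cancel]; rfl
  have hinj : Function.Injective (Matrix.toLin' g) := by
    have hcomp : Matrix.toLin' ((h⁻¹ : Matrix.GeneralLinearGroup (Fin N) ℂ) :
        Matrix (Fin N) (Fin N) ℂ) ∘ₗ Matrix.toLin' g = LinearMap.id := by
      rw [← Matrix.toLin'_mul, hinv1, Matrix.toLin'_one]
    have hli : Function.LeftInverse
        (Matrix.toLin' ((h⁻¹ : Matrix.GeneralLinearGroup (Fin N) ℂ) :
          Matrix (Fin N) (Fin N) ℂ)) (Matrix.toLin' g) := fun x => by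
      have := congrArg (fun φ => φ x) hcomp
      simpa using this
    exact hli.injective
  -- build a refining full flag
  obtain ⟨V, hVmono, hVfr, hVref⟩ := exists_refining_chain (Matrix.toLin' g) W hWmono hWtop
    (fun j => (hstab j).le)
  have hNfr : Module.finrank ℂ (Fin N → ℂ) = N := Module.finrank_fin_fun ℂ
  set Vf : Fin (N + 1) → Submodule ℂ (Fin N → ℂ) := fun i => V i with hVf
  have hVfmono : Monotone Vf := fun i i' hii' => hVmono (by exact_mod_cast hii')
  have hVf0 : Vf 0 = ⊥ := by
    have := (hVfr 0 (by omega)).1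
    exact Submodule.finrank_eq_zero.mp (this.trans rfl)
  have hVftop : Vf (Fin.last N) = ⊤ := by
    have := (hVfr N (by omega)).1
    refine Submodule.eq_top_of_finrank_eq ?_
    rw [hNfr]
    simpa [Vf, Fin.val_last] using this
  have hVffr : ∀ i : Fin (N + 1), Module.finrank ℂ (Vf i) = (i : ℕ) :=
    fun i => (hVfr i (by omega)).1
  have hcon := hBorel Vf hVfmono hVf0 hVftop hVffr
  refine ⟨_, ?_, ?_, ?_, hcon.isPreconnected⟩
  · -- Borel set ⊆ parabolic set
    rintro g' ⟨h', hH', hco', hst'⟩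
    refine ⟨h', hH', hco', fun j => ?_⟩
    have hjle : Module.finrank ℂ (W j) < N + 1 := by
      have := Submodule.finrank_le (W j)
      omega
    have := hst' ⟨Module.finrank ℂ (W j), hjle⟩
    rw [← hVref j]
    exact this
  · exact ⟨1, H.one_mem, rfl, fun i => by rw [Matrix.toLin'_one, Submodule.map_id]⟩
  · -- g belongs to the Borel set
    refine ⟨h, hH, hcoe, fun i => ?_⟩
    have hle := (hVfr i (by omega)).2
    refine Submodule.eq_of_le_of_finrank_le hle ?_
    exact le_of_eq ((Submodule.equivMapOfInjective _ hinj (Vf i)).finrank_eq)
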